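/- Let r ≥ 2, and let X and Y be edge-subgraphs of K_{r,r} with partite sets A_X ⊔ B_X and A_Y ⊔ B_Y respectively, such that 2·(δ(X) + δ(Y)) ≥ 3r + 2. Let σ : V(X) → V(Y) be a bijection and suppose u ∈ A_Y and v ∈ B_Y are such that u′ = σ⁻¹(u) ∈ A_X, v′ = σ⁻¹(v) ∈ B_X, u′ and v′ are adjacent in X, and |(A_X \ {u′}) ∩ σ⁻¹(A_Y \ {u})| ≥ (r−1)/2. Then there exists a bijection μ : V(X) → V(Y) in the same connected component of FS(X,Y) as σ such that μ(A_X) = A_Y, μ(B_X) = B_Y, μ(u′) = u, and μ(v′) = v. -/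

import Mathlib

open SimpleGraph

/-- The friends-and-strangers graph `FS X Y` of two graphs `X`, `Y`: vertices are the
bijections from `V(X)` to `V(Y)`, and `σ`, `τ` are adjacent iff they agree everywhere except
at two vertices `a`, `b` adjacent in `X` whose images under `σ` are adjacent in `Y`,
with `τ a = σ b` and `τ b = σ a`. -/
def FS {V W : Type*} (X : SimpleGraph V) (Y : SimpleGraph W) :
    SimpleGraph (V ≃ W) where
  Adj σ τ := ∃ a b : V, X.Adj a b ∧ Y.Adj (σ a) (σ b) ∧
      τ a = σ b ∧ τ b = σ a ∧ ∀ w : V, w ≠ a → w ≠ b → τ w = σ w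
  symm := by
    refine ⟨?_⟩
    rintro σ τ ⟨a, b, hX, hY, h1, h2, h3⟩
    exact ⟨a, b, hX, by rw [h1, h2]; exact hY.symm, h2.symm, h1.symm,
      fun w hwa hwb => (h3 w hwa hwb).symm⟩
  loopless := by
    refine ⟨?_⟩
    rintro σ ⟨a, b, hX, _, h1, _, _⟩
    exact hX.ne (σ.injective h1)

/-- The minimum degree of a graph (stated via `Set.ncard`, so that no decidability
assumptions are required). -/
noncomputable def minDeg {V : Type*} (G : SimpleGraph V) : ℕ :=
  ⨅ v : V, (G.neighborSet v).ncard

/-- Vertices `u`, `v` of `Y` are `(X,Y)`-exchangeable from `σ` if `σ` and `(u v) ∘ σ`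
lie in the same connected component of `FS X Y`. -/
def Exchangeable {V W : Type*} (X : SimpleGraph V) (Y : SimpleGraph W)
    (σ : V ≃ W) (u v : W) : Prop :=
  letI := Classical.decEq W
  (FS X Y).Reachable σ (σ.trans (Equiv.swap u v))

namespace St19

open Finset

variable {r : ℕ}

def AF (r : ℕ) : Finset (Fin r ⊕ Fin r) :=
  Finset.univ.map ⟨Sum.inl, Sum.inl_injective⟩

def BF (r : ℕ) : Finset (Fin r ⊕ Fin r) :=
  Finset.univ.map ⟨Sum.inr, Sum.inr_injective⟩

lemma mem_AF {x : Fin r ⊕ Fin r} : x ∈ AF r ↔ ∃ a, x = Sum.inl a := by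
  simp [AF, eq_comm]

lemma mem_BF {x : Fin r ⊕ Fin r} : x ∈ BF r ↔ ∃ a, x = Sum.inr a := by
  simp [BF, eq_comm]

lemma AF_card : (AF r).card = r := by simp [AF]

lemma BF_card : (BF r).card = r := by simp [BF]

lemma mem_AF_or_BF (x : Fin r ⊕ Fin r) : x ∈ AF r ∨ x ∈ BF r := by
  rcases x with a | b
  · exact Or.inl (mem_AF.2 ⟨a, rfl⟩)
  · exact Or.inr (mem_BF.2 ⟨b, rfl⟩)

lemma not_AF_BF {x : Fin r ⊕ Fin r} (h1 : x ∈ AF r) (h2 : x ∈ BF r) : False := by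
  rcases mem_AF.1 h1 with ⟨a, rfl⟩
  rcases mem_BF.1 h2 with ⟨b, h⟩
  exact Sum.inl_ne_inr h

lemma mem_BF_iff_not_AF {x : Fin r ⊕ Fin r} : x ∈ BF r ↔ x ∉ AF r := by
  constructor
  · exact fun h2 h1 => not_AF_BF h1 h2
  · intro h; rcases mem_AF_or_BF x with h' | h'
    · exact absurd h' h
    · exact h'

noncomputable def NB (G : SimpleGraph (Fin r ⊕ Fin r)) (x : Fin r ⊕ Fin r) :
    Finset (Fin r ⊕ Fin r) :=
  (G.neighborSet x).toFinite.toFinset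

lemma mem_NB {G : SimpleGraph (Fin r ⊕ Fin r)} {x w : Fin r ⊕ Fin r} :
    w ∈ NB G x ↔ G.Adj x w := by
  simp [NB, Set.Finite.mem_toFinset]

lemma minDeg_le_NB (G : SimpleGraph (Fin r ⊕ Fin r)) (x : Fin r ⊕ Fin r) :
    minDeg G ≤ (NB G x).card := by
  have h : (G.neighborSet x).ncard = (NB G x).card :=
    Set.ncard_eq_toFinset_card _ (Set.toFinite _)
  exact h ▸ ciInf_le (OrderBot.bddBelow _) x

def pre (τ : (Fin r ⊕ Fin r) ≃ (Fin r ⊕ Fin r)) (S : Finset (Fin r ⊕ Fin r)) :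
    Finset (Fin r ⊕ Fin r) :=
  S.map τ.symm.toEmbedding

lemma mem_pre {τ : (Fin r ⊕ Fin r) ≃ (Fin r ⊕ Fin r)} {S : Finset (Fin r ⊕ Fin r)}
    {x : Fin r ⊕ Fin r} : x ∈ pre τ S ↔ τ x ∈ S := by
  simp [pre, Finset.mem_map_equiv]

lemma pre_card (τ : (Fin r ⊕ Fin r) ≃ (Fin r ⊕ Fin r)) (S : Finset (Fin r ⊕ Fin r)) :
    (pre τ S).card = S.card := Finset.card_map _

def badA (τ : (Fin r ⊕ Fin r) ≃ (Fin r ⊕ Fin r)) : Finset (Fin r ⊕ Fin r) :=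
  (AF r).filter (fun x => τ x ∈ BF r)

def badB (τ : (Fin r ⊕ Fin r) ≃ (Fin r ⊕ Fin r)) : Finset (Fin r ⊕ Fin r) :=
  (BF r).filter (fun x => τ x ∈ AF r)

def GA (τ : (Fin r ⊕ Fin r) ≃ (Fin r ⊕ Fin r)) : Finset (Fin r ⊕ Fin r) :=
  (AF r).filter (fun x => τ x ∈ AF r)

def GB (τ : (Fin r ⊕ Fin r) ≃ (Fin r ⊕ Fin r)) : Finset (Fin r ⊕ Fin r) :=
  (BF r).filter (fun x => τ x ∈ BF r)

variable {τ : (Fin r ⊕ Fin r) ≃ (Fin r ⊕ Fin r)}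

lemma mem_badA {x} : x ∈ badA τ ↔ x ∈ AF r ∧ τ x ∈ BF r := by simp [badA]
lemma mem_badB {x} : x ∈ badB τ ↔ x ∈ BF r ∧ τ x ∈ AF r := by simp [badB]
lemma mem_GA {x} : x ∈ GA τ ↔ x ∈ AF r ∧ τ x ∈ AF r := by simp [GA]
lemma mem_GB {x} : x ∈ GB τ ↔ x ∈ BF r ∧ τ x ∈ BF r := by simp [GB]

lemma GA_badA_card (τ : (Fin r ⊕ Fin r) ≃ (Fin r ⊕ Fin r)) : (GA τ).card + (badA τ).card = r := by
  have h := Finset.card_filter_add_card_filter_not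
    (s := AF r) (p := fun x => τ x ∈ AF r)
  have h2 : (AF r).filter (fun x => ¬ τ x ∈ AF r) = badA τ := by
    apply Finset.filter_congr
    intro x hx
    simp only [mem_BF_iff_not_AF]
  rw [h2] at h
  have h3 : (GA τ).card + (badA τ).card = (AF r).card := h
  rwa [AF_card] at h3

lemma GB_badB_card (τ : (Fin r ⊕ Fin r) ≃ (Fin r ⊕ Fin r)) : (GB τ).card + (badB τ).card = r := by
  have h := Finset.card_filter_add_card_filter_not
    (s := BF r) (p := fun x => τ x ∈ BF r)
  have h2 : (BF r).filter (fun x => ¬ τ x ∈ BF r) = badB τ := by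
    apply Finset.filter_congr
    intro x hx
    constructor
    · intro h'; exact (mem_AF_or_BF _).resolve_right h'
    · intro h' h''; exact not_AF_BF h' h''
  rw [h2] at h
  have h3 : (GB τ).card + (badB τ).card = (BF r).card := h
  rwa [BF_card] at h3

lemma badA_card_eq_badB_card (τ : (Fin r ⊕ Fin r) ≃ (Fin r ⊕ Fin r)) : (badA τ).card = (badB τ).card := by
  have hsplit : pre τ (BF r) = badA τ ∪ GB τ := by
    ext x
    simp only [mem_pre, mem_union, mem_badA, mem_GB]
    rcases mem_AF_or_BF x with hx | hx
    · constructor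
      · intro h; exact Or.inl ⟨hx, h⟩
      · rintro (⟨_, h⟩ | ⟨h, _⟩)
        · exact h
        · exact absurd hx (fun h' => not_AF_BF h' h)
    · constructor
      · intro h; exact Or.inr ⟨hx, h⟩
      · rintro (⟨h, _⟩ | ⟨_, h⟩)
        · exact absurd hx (fun h' => not_AF_BF h h')
        · exact h
  have hdisj : Disjoint (badA τ) (GB τ) := by
    rw [Finset.disjoint_left]
    intro x h1 h2
    exact not_AF_BF (mem_badA.1 h1).1 (mem_GB.1 h2).1
  have hc : (pre τ (BF r)).card = (badA τ).card + (GB τ).card := by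
    rw [hsplit, Finset.card_union_of_disjoint hdisj]
  rw [pre_card, BF_card] at hc
  have := GB_badB_card (r := r) τ
  omega

lemma ie2 {α : Type*} [DecidableEq α] {U S T : Finset α} (hS : S ⊆ U) (hT : T ⊆ U) :
    S.card + T.card ≤ U.card + (S ∩ T).card := by
  have h1 := Finset.card_union_add_card_inter S T
  have h2 : (S ∪ T).card ≤ U.card := Finset.card_le_card (Finset.union_subset hS hT)
  omega

lemma split_A {N : Finset (Fin r ⊕ Fin r)} (hN : N ⊆ AF r) (τ : (Fin r ⊕ Fin r) ≃ (Fin r ⊕ Fin r)) :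
    (N ∩ GA τ).card + (N ∩ badA τ).card = N.card := by
  have h := Finset.card_filter_add_card_filter_not
    (s := N) (p := fun x => τ x ∈ AF r)
  have h1 : N ∩ GA τ = N.filter (fun x => τ x ∈ AF r) := by
    ext x; simp only [mem_inter, mem_GA, mem_filter]
    exact ⟨fun ⟨h1, _, h3⟩ => ⟨h1, h3⟩, fun ⟨h1, h2⟩ => ⟨h1, hN h1, h2⟩⟩
  have h2 : N ∩ badA τ = N.filter (fun x => ¬ τ x ∈ AF r) := by
    ext x; simp only [mem_inter, mem_badA, mem_filter, ← mem_BF_iff_not_AF]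
    exact ⟨fun ⟨h1, _, h3⟩ => ⟨h1, h3⟩, fun ⟨h1, h2⟩ => ⟨h1, hN h1, h2⟩⟩
  rw [h1, h2, h]

lemma split_B {N : Finset (Fin r ⊕ Fin r)} (hN : N ⊆ BF r) (τ : (Fin r ⊕ Fin r) ≃ (Fin r ⊕ Fin r)) :
    (N ∩ GB τ).card + (N ∩ badB τ).card = N.card := by
  have h := Finset.card_filter_add_card_filter_not
    (s := N) (p := fun x => τ x ∈ BF r)
  have h1 : N ∩ GB τ = N.filter (fun x => τ x ∈ BF r) := by
    ext x; simp only [mem_inter, mem_GB, mem_filter]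
    exact ⟨fun ⟨h1, _, h3⟩ => ⟨h1, h3⟩, fun ⟨h1, h2⟩ => ⟨h1, hN h1, h2⟩⟩
  have h2 : N ∩ badB τ = N.filter (fun x => ¬ τ x ∈ BF r) := by
    ext x; simp only [mem_inter, mem_badB, mem_filter]
    constructor
    · rintro ⟨h1, _, h3⟩; exact ⟨h1, fun h' => not_AF_BF h3 h'⟩
    · rintro ⟨h1, h2⟩
      exact ⟨h1, hN h1, (mem_AF_or_BF _).resolve_right h2⟩
  rw [h1, h2, h]

lemma split_pre_A {S : Finset (Fin r ⊕ Fin r)} (hS : S ⊆ AF r) (τ : (Fin r ⊕ Fin r) ≃ (Fin r ⊕ Fin r)) :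
    (pre τ S ∩ GA τ).card + (pre τ S ∩ badB τ).card = S.card := by
  have hsub : pre τ S ⊆ GA τ ∪ badB τ := by
    intro x hx
    have hv : τ x ∈ AF r := hS (mem_pre.1 hx)
    rcases mem_AF_or_BF x with h | h
    · exact Finset.mem_union_left _ (mem_GA.2 ⟨h, hv⟩)
    · exact Finset.mem_union_right _ (mem_badB.2 ⟨h, hv⟩)
  have hdisj : Disjoint (pre τ S ∩ GA τ) (pre τ S ∩ badB τ) := by
    rw [Finset.disjoint_left]
    intro x h1 h2
    exact not_AF_BF (mem_GA.1 (mem_inter.1 h1).2).1 (mem_badB.1 (mem_inter.1 h2).2).1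
  have hun : (pre τ S ∩ GA τ) ∪ (pre τ S ∩ badB τ) = pre τ S := by
    rw [← Finset.inter_union_distrib_left]
    exact Finset.inter_eq_left.2 hsub
  have := Finset.card_union_of_disjoint hdisj
  rw [hun] at this
  rw [← this, pre_card]

lemma split_pre_B {S : Finset (Fin r ⊕ Fin r)} (hS : S ⊆ BF r) (τ : (Fin r ⊕ Fin r) ≃ (Fin r ⊕ Fin r)) :
    (pre τ S ∩ GB τ).card + (pre τ S ∩ badA τ).card = S.card := by
  have hsub : pre τ S ⊆ GB τ ∪ badA τ := by
    intro x hx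
    have hv : τ x ∈ BF r := hS (mem_pre.1 hx)
    rcases mem_AF_or_BF x with h | h
    · exact Finset.mem_union_right _ (mem_badA.2 ⟨h, hv⟩)
    · exact Finset.mem_union_left _ (mem_GB.2 ⟨h, hv⟩)
  have hdisj : Disjoint (pre τ S ∩ GB τ) (pre τ S ∩ badA τ) := by
    rw [Finset.disjoint_left]
    intro x h1 h2
    exact not_AF_BF (mem_badA.1 (mem_inter.1 h2).2).1 (mem_GB.1 (mem_inter.1 h1).2).1
  have hun : (pre τ S ∩ GB τ) ∪ (pre τ S ∩ badA τ) = pre τ S := by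
    rw [← Finset.inter_union_distrib_left]
    exact Finset.inter_eq_left.2 hsub
  have := Finset.card_union_of_disjoint hdisj
  rw [hun] at this
  rw [← this, pre_card]

end St19

namespace St19

open Finset

variable {r : ℕ}

lemma move_other (τ : (Fin r ⊕ Fin r) ≃ (Fin r ⊕ Fin r)) {a b w : Fin r ⊕ Fin r}
    (hwa : w ≠ a) (hwb : w ≠ b) :
    (τ.trans (Equiv.swap (τ a) (τ b))) w = τ w := by
  simp only [Equiv.trans_apply]
  exact Equiv.swap_apply_of_ne_of_ne (fun h => hwa (τ.injective h))
    (fun h => hwb (τ.injective h))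

lemma move_left (τ : (Fin r ⊕ Fin r) ≃ (Fin r ⊕ Fin r)) (a b : Fin r ⊕ Fin r) :
    (τ.trans (Equiv.swap (τ a) (τ b))) a = τ b := by
  simp [Equiv.trans_apply]

lemma move_right (τ : (Fin r ⊕ Fin r) ≃ (Fin r ⊕ Fin r)) (a b : Fin r ⊕ Fin r) :
    (τ.trans (Equiv.swap (τ a) (τ b))) b = τ a := by
  simp [Equiv.trans_apply]

lemma move_adj (X Y : SimpleGraph (Fin r ⊕ Fin r))
    {τ : (Fin r ⊕ Fin r) ≃ (Fin r ⊕ Fin r)} {a b : Fin r ⊕ Fin r}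
    (hab : X.Adj a b) (hY : Y.Adj (τ a) (τ b)) :
    (FS X Y).Adj τ (τ.trans (Equiv.swap (τ a) (τ b))) :=
  ⟨a, b, hab, hY, move_left τ a b, move_right τ a b,
    fun _ hwa hwb => move_other τ hwa hwb⟩

lemma badA_move_fix {τ : (Fin r ⊕ Fin r) ≃ (Fin r ⊕ Fin r)} {a b : Fin r ⊕ Fin r}
    (ha : a ∈ AF r) (hb : b ∈ BF r) (hgb : τ b ∈ AF r) :
    badA (τ.trans (Equiv.swap (τ a) (τ b))) = (badA τ).erase a := by
  have hbA : b ∉ AF r := fun h => not_AF_BF h hb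
  have hnb : τ b ∉ BF r := fun h => not_AF_BF hgb h
  ext w
  rcases eq_or_ne w a with rfl | hwa
  · have hL := move_left τ w b
    simp [mem_badA, mem_erase, hL, hnb]
  rcases eq_or_ne w b with rfl | hwb
  · simp [mem_badA, mem_erase, hbA]
  · simp only [mem_badA, mem_erase, move_other τ hwa hwb]
    constructor
    · rintro ⟨h1, h2⟩; exact ⟨hwa, h1, h2⟩
    · rintro ⟨-, h⟩; exact h

lemma badA_move_break {τ : (Fin r ⊕ Fin r) ≃ (Fin r ⊕ Fin r)} {a b : Fin r ⊕ Fin r}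
    (ha : a ∈ AF r) (hb : b ∈ BF r) (hgb : τ b ∈ BF r) :
    badA (τ.trans (Equiv.swap (τ a) (τ b))) = insert a (badA τ) := by
  have hbA : b ∉ AF r := fun h => not_AF_BF h hb
  have hba : b ≠ a := fun h => hbA (h ▸ ha)
  ext w
  rcases eq_or_ne w a with rfl | hwa
  · have hL : (τ.trans (Equiv.swap (τ w) (τ b))) w ∈ BF r := by
      rw [move_left]; exact hgb
    simp [mem_badA, mem_insert, ha, hL, hgb]
  rcases eq_or_ne w b with rfl | hwb
  · simp [mem_badA, mem_insert, hbA, hba]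
  · simp only [mem_badA, mem_insert, move_other τ hwa hwb]
    constructor
    · rintro ⟨h1, h2⟩; exact Or.inr ⟨h1, h2⟩
    · rintro (h | h)
      · exact (hwa h).elim
      · exact h

lemma NB_sub_BF {X : SimpleGraph (Fin r ⊕ Fin r)}
    (hX : X ≤ completeBipartiteGraph (Fin r) (Fin r)) {x : Fin r ⊕ Fin r}
    (hx : x ∈ AF r) : NB X x ⊆ BF r := by
  intro w hw
  have h := hX (mem_NB.1 hw)
  rcases mem_AF.1 hx with ⟨i, rfl⟩
  rcases h with ⟨-, h2⟩ | ⟨h1, -⟩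
  · rcases w with j | j
    · simp at h2
    · exact mem_BF.2 ⟨j, rfl⟩
  · simp at h1

lemma NB_sub_AF {X : SimpleGraph (Fin r ⊕ Fin r)}
    (hX : X ≤ completeBipartiteGraph (Fin r) (Fin r)) {x : Fin r ⊕ Fin r}
    (hx : x ∈ BF r) : NB X x ⊆ AF r := by
  intro w hw
  have h := hX (mem_NB.1 hw)
  rcases mem_BF.1 hx with ⟨i, rfl⟩
  rcases h with ⟨h1, -⟩ | ⟨-, h2⟩
  · simp at h1
  · rcases w with j | j
    · exact mem_AF.2 ⟨j, rfl⟩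
    · simp at h2

end St19

namespace St19

open Finset

variable {r : ℕ}

lemma ne_of_AF_BF {x y : Fin r ⊕ Fin r} (hx : x ∈ AF r) (hy : y ∈ BF r) : x ≠ y :=
  fun h => not_AF_BF hx (h ▸ hy)

lemma decrease (X Y : SimpleGraph (Fin r ⊕ Fin r))
    (hX : X ≤ completeBipartiteGraph (Fin r) (Fin r))
    (hY : Y ≤ completeBipartiteGraph (Fin r) (Fin r))
    (hdeg : 2 * (minDeg X + minDeg Y) ≥ 3 * r + 2)
    {u' v' u v : Fin r ⊕ Fin r}
    (hu'A : u' ∈ AF r) (hv'B : v' ∈ BF r) (huA : u ∈ AF r) (hvB : v ∈ BF r)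
    (τ : (Fin r ⊕ Fin r) ≃ (Fin r ⊕ Fin r))
    (hpu : τ u' = u) (hpv : τ v' = v) (hk : (badA τ).Nonempty) :
    ∃ τ' : (Fin r ⊕ Fin r) ≃ (Fin r ⊕ Fin r), (FS X Y).Reachable τ τ' ∧
      τ' u' = u ∧ τ' v' = v ∧ (badA τ').card < (badA τ).card := by
  classical
  have hτu' : τ u' ∈ AF r := by rw [hpu]; exact huA
  have hτv' : τ v' ∈ BF r := by rw [hpv]; exact hvB
  have hu'nb : u' ∉ badA τ := fun h => not_AF_BF hτu' (mem_badA.1 h).2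
  have hv'nb : v' ∉ badB τ := fun h => not_AF_BF (mem_badB.1 h).2 hτv'
  have hkpos : 0 < (badA τ).card := Finset.card_pos.2 hk
  by_cases hfix : ∃ a ∈ badA τ, ∃ b ∈ badB τ, X.Adj a b ∧ Y.Adj (τ a) (τ b)
  · obtain ⟨a, ha, b, hb, hab, hYab⟩ := hfix
    have haA : a ∈ AF r := (mem_badA.1 ha).1
    have hbB : b ∈ BF r := (mem_badB.1 hb).1
    have hu'a : u' ≠ a := fun h => hu'nb (h ▸ ha)
    have hv'b : v' ≠ b := fun h => hv'nb (h ▸ hb)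
    have hu'b : u' ≠ b := ne_of_AF_BF hu'A hbB
    have hv'a : v' ≠ a := fun h => not_AF_BF haA (h ▸ hv'B)
    refine ⟨τ.trans (Equiv.swap (τ a) (τ b)), (move_adj X Y hab hYab).reachable,
      ?_, ?_, ?_⟩
    · rw [move_other τ hu'a hu'b]; exact hpu
    · rw [move_other τ (fun h => hv'a h) hv'b]; exact hpv
    · rw [badA_move_fix haA hbB (mem_badB.1 hb).2]
      have := Finset.card_erase_of_mem ha
      omega
  · push_neg at hfix
    have hbBne : (badB τ).Nonempty := by
      rw [← Finset.card_pos, ← badA_card_eq_badB_card]; exact hkpos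
    obtain ⟨a, haBad, hamin⟩ :=
      Finset.exists_min_image (badA τ) (fun α => (NB X α ∩ badB τ).card) hk
    obtain ⟨b, hbBad, hbmax⟩ :=
      Finset.exists_max_image (badB τ) (fun β => (NB X β ∩ badA τ).card) hbBne
    have haA : a ∈ AF r := (mem_badA.1 haBad).1
    have hqB : τ a ∈ BF r := (mem_badA.1 haBad).2
    have hbB : b ∈ BF r := (mem_badB.1 hbBad).1
    have hpA : τ b ∈ AF r := (mem_badB.1 hbBad).2
    -- double counting: min ≤ max
    have hrw1 : ∀ α, NB X α ∩ badB τ = (badB τ).filter (fun β => X.Adj α β) := by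
      intro α; ext w
      simp only [mem_inter, mem_filter, mem_NB]
      exact and_comm
    have hrw2 : ∀ β, NB X β ∩ badA τ = (badA τ).filter (fun α => X.Adj α β) := by
      intro β; ext w
      simp only [mem_inter, mem_filter, mem_NB]
      constructor
      · rintro ⟨h1, h2⟩; exact ⟨h2, h1.symm⟩
      · rintro ⟨h1, h2⟩; exact ⟨h2.symm, h1⟩
    have hsum : ∑ α ∈ badA τ, (NB X α ∩ badB τ).card
        = ∑ β ∈ badB τ, (NB X β ∩ badA τ).card := by
      calc ∑ α ∈ badA τ, (NB X α ∩ badB τ).card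
          = ∑ α ∈ badA τ, ∑ β ∈ badB τ, if X.Adj α β then 1 else 0 := by
            refine Finset.sum_congr rfl fun α _ => ?_
            rw [hrw1 α, Finset.card_filter]
        _ = ∑ β ∈ badB τ, ∑ α ∈ badA τ, if X.Adj α β then 1 else 0 :=
            Finset.sum_comm
        _ = ∑ β ∈ badB τ, (NB X β ∩ badA τ).card := by
            refine Finset.sum_congr rfl fun β _ => ?_
            rw [hrw2 β, Finset.card_filter]
    have h1 : (badA τ).card * (NB X a ∩ badB τ).card
        ≤ ∑ α ∈ badA τ, (NB X α ∩ badB τ).card := by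
      have := Finset.card_nsmul_le_sum (badA τ)
        (fun α => (NB X α ∩ badB τ).card) ((NB X a ∩ badB τ).card)
        (fun x hx => hamin x hx)
      simpa [smul_eq_mul] using this
    have h2 : ∑ β ∈ badB τ, (NB X β ∩ badA τ).card
        ≤ (badA τ).card * (NB X b ∩ badA τ).card := by
      have := Finset.sum_le_card_nsmul (badB τ)
        (fun β => (NB X β ∩ badA τ).card) ((NB X b ∩ badA τ).card)
        (fun x hx => hbmax x hx)
      rw [badA_card_eq_badB_card τ]
      simpa [smul_eq_mul] using this
    have heab : (NB X a ∩ badB τ).card ≤ (NB X b ∩ badA τ).card :=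
      Nat.le_of_mul_le_mul_left ((h1.trans (le_of_eq hsum)).trans h2) hkpos
    -- disjointness from no-fixable-pair
    have hdj1 : Disjoint (NB X a ∩ badB τ) (pre τ (NB Y (τ a)) ∩ badB τ) := by
      rw [Finset.disjoint_left]
      rintro β h1' h2'
      exact hfix a haBad β (mem_inter.1 h1').2 (mem_NB.1 (mem_inter.1 h1').1)
        (mem_NB.1 (mem_pre.1 (mem_inter.1 h2').1))
    have hfa : (NB X a ∩ badB τ).card + (pre τ (NB Y (τ a)) ∩ badB τ).card
        ≤ (badB τ).card := by
      rw [← Finset.card_union_of_disjoint hdj1]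
      exact Finset.card_le_card
        (Finset.union_subset Finset.inter_subset_right Finset.inter_subset_right)
    have hdj2 : Disjoint (NB X b ∩ badA τ) (pre τ (NB Y (τ b)) ∩ badA τ) := by
      rw [Finset.disjoint_left]
      rintro α h1' h2'
      exact hfix α (mem_inter.1 h1').2 b hbBad
        ((mem_NB.1 (mem_inter.1 h1').1).symm)
        ((mem_NB.1 (mem_pre.1 (mem_inter.1 h2').1)).symm)
    have hfb : (NB X b ∩ badA τ).card + (pre τ (NB Y (τ b)) ∩ badA τ).card
        ≤ (badA τ).card := by
      rw [← Finset.card_union_of_disjoint hdj2]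
      exact Finset.card_le_card
        (Finset.union_subset Finset.inter_subset_right Finset.inter_subset_right)
    -- standing cardinality facts
    have hGAc := GA_badA_card τ
    have hGBc := GB_badB_card τ
    have hkk := badA_card_eq_badB_card τ
    have hma := minDeg_le_NB X a
    have hmb := minDeg_le_NB X b
    have hnq := minDeg_le_NB Y (τ a)
    have hnp := minDeg_le_NB Y (τ b)
    have hsA := split_B (NB_sub_BF hX haA) τ
    have hsB := split_A (NB_sub_AF hX hbB) τ
    have hsq := split_pre_A (NB_sub_AF hY hqB) τ
    have hsp := split_pre_B (NB_sub_BF hY hpA) τ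
    have hcap1 : (NB X a ∩ GB τ).card ≤ (GB τ).card :=
      Finset.card_le_card Finset.inter_subset_right
    have hcap2 : (pre τ (NB Y (τ a)) ∩ GA τ).card ≤ (GA τ).card :=
      Finset.card_le_card Finset.inter_subset_right
    have heb : (NB X b ∩ badA τ).card ≤ (badA τ).card :=
      Finset.card_le_card Finset.inter_subset_right
    -- the set T of candidates x1
    have hieT : (NB X b ∩ GA τ).card + (pre τ (NB Y (τ a)) ∩ GA τ).card
        ≤ (GA τ).card + ((NB X b ∩ GA τ) ∩ (pre τ (NB Y (τ a)) ∩ GA τ)).card :=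
      ie2 Finset.inter_subset_right Finset.inter_subset_right
    have hT2 : 2 ≤ ((NB X b ∩ GA τ) ∩ (pre τ (NB Y (τ a)) ∩ GA τ)).card := by
      omega
    obtain ⟨x1, hx1T, hx1u⟩ :=
      Finset.exists_mem_ne (lt_of_lt_of_le one_lt_two hT2) u'
    obtain ⟨hx1l, hx1r⟩ := mem_inter.1 hx1T
    have hbx1Adj : X.Adj b x1 := mem_NB.1 (mem_inter.1 hx1l).1
    have hx1GA : x1 ∈ GA τ := (mem_inter.1 hx1l).2
    have hqp1Adj : Y.Adj (τ a) (τ x1) := mem_NB.1 (mem_pre.1 (mem_inter.1 hx1r).1)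
    have hx1A : x1 ∈ AF r := (mem_GA.1 hx1GA).1
    have hp1A : τ x1 ∈ AF r := (mem_GA.1 hx1GA).2
    -- the set S of candidates y1
    have hmx1 := minDeg_le_NB X x1
    have hnp1 := minDeg_le_NB Y (τ x1)
    have hsx1 := split_B (NB_sub_BF hX hx1A) τ
    have hsp1 := split_pre_B (NB_sub_BF hY hp1A) τ
    have hx1bB : (NB X x1 ∩ badB τ).card ≤ (badB τ).card :=
      Finset.card_le_card Finset.inter_subset_right
    have hp1bA : (pre τ (NB Y (τ x1)) ∩ badA τ).card ≤ (badA τ).card :=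
      Finset.card_le_card Finset.inter_subset_right
    have hie1 : (NB X a ∩ GB τ).card + (NB X x1 ∩ GB τ).card
        ≤ (GB τ).card + ((NB X a ∩ GB τ) ∩ (NB X x1 ∩ GB τ)).card :=
      ie2 Finset.inter_subset_right Finset.inter_subset_right
    have hie2' : (pre τ (NB Y (τ b)) ∩ GB τ).card + (pre τ (NB Y (τ x1)) ∩ GB τ).card
        ≤ (GB τ).card + ((pre τ (NB Y (τ b)) ∩ GB τ) ∩ (pre τ (NB Y (τ x1)) ∩ GB τ)).card :=
      ie2 Finset.inter_subset_right Finset.inter_subset_right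
    have hie3 : ((NB X a ∩ GB τ) ∩ (NB X x1 ∩ GB τ)).card
        + ((pre τ (NB Y (τ b)) ∩ GB τ) ∩ (pre τ (NB Y (τ x1)) ∩ GB τ)).card
        ≤ (GB τ).card + (((NB X a ∩ GB τ) ∩ (NB X x1 ∩ GB τ))
            ∩ ((pre τ (NB Y (τ b)) ∩ GB τ) ∩ (pre τ (NB Y (τ x1)) ∩ GB τ))).card :=
      ie2 (Finset.inter_subset_left.trans Finset.inter_subset_right)
        (Finset.inter_subset_left.trans Finset.inter_subset_right)
    have hS2 : 2 ≤ (((NB X a ∩ GB τ) ∩ (NB X x1 ∩ GB τ))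
        ∩ ((pre τ (NB Y (τ b)) ∩ GB τ) ∩ (pre τ (NB Y (τ x1)) ∩ GB τ))).card := by
      omega
    obtain ⟨y1, hy1S, hy1v⟩ :=
      Finset.exists_mem_ne (lt_of_lt_of_le one_lt_two hS2) v'
    obtain ⟨hy12, hy34⟩ := mem_inter.1 hy1S
    have hay1Adj : X.Adj a y1 := mem_NB.1 (mem_inter.1 (mem_inter.1 hy12).1).1
    have hy1GB : y1 ∈ GB τ := (mem_inter.1 (mem_inter.1 hy12).1).2
    have hx1y1Adj : X.Adj x1 y1 := mem_NB.1 (mem_inter.1 (mem_inter.1 hy12).2).1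
    have hpq1Adj : Y.Adj (τ b) (τ y1) :=
      mem_NB.1 (mem_pre.1 (mem_inter.1 (mem_inter.1 hy34).1).1)
    have hp1q1Adj : Y.Adj (τ x1) (τ y1) :=
      mem_NB.1 (mem_pre.1 (mem_inter.1 (mem_inter.1 hy34).2).1)
    have hy1B : y1 ∈ BF r := (mem_GB.1 hy1GB).1
    have hq1B : τ y1 ∈ BF r := (mem_GB.1 hy1GB).2
    -- distinctness
    have hx1nb : x1 ∉ badA τ := fun h => not_AF_BF hp1A (mem_badA.1 h).2
    have hy1nb : y1 ∉ badB τ := fun h => not_AF_BF (mem_badB.1 h).2 hq1B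
    have hax1 : a ≠ x1 := fun h => hx1nb (h ▸ haBad)
    have hby1 : b ≠ y1 := fun h => hy1nb (h ▸ hbBad)
    have hay1 : a ≠ y1 := ne_of_AF_BF haA hy1B
    have hab' : a ≠ b := ne_of_AF_BF haA hbB
    have hx1b : x1 ≠ b := ne_of_AF_BF hx1A hbB
    have hx1y1 : x1 ≠ y1 := ne_of_AF_BF hx1A hy1B
    have hu'x1 : u' ≠ x1 := hx1u.symm
    have hu'a : u' ≠ a := fun h => hu'nb (h ▸ haBad)
    have hu'b : u' ≠ b := ne_of_AF_BF hu'A hbB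
    have hu'y1 : u' ≠ y1 := ne_of_AF_BF hu'A hy1B
    have hv'y1 : v' ≠ y1 := hy1v.symm
    have hv'b : v' ≠ b := fun h => hv'nb (h ▸ hbBad)
    have hv'a : v' ≠ a := (ne_of_AF_BF haA hv'B).symm
    have hv'x1 : v' ≠ x1 := (ne_of_AF_BF hx1A hv'B).symm
    -- the three moves
    set τ1 := τ.trans (Equiv.swap (τ x1) (τ y1)) with hτ1def
    have hadj1 : (FS X Y).Adj τ τ1 := move_adj X Y hx1y1Adj hp1q1Adj
    have e1a : τ1 a = τ a := move_other τ hax1 hay1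
    have e1b : τ1 b = τ b := move_other τ hx1b.symm hby1
    have e1y1 : τ1 y1 = τ x1 := move_right τ x1 y1
    have e1u : τ1 u' = τ u' := move_other τ hu'x1 hu'y1
    have e1v : τ1 v' = τ v' := move_other τ hv'x1 hv'y1
    set τ2 := τ1.trans (Equiv.swap (τ1 a) (τ1 y1)) with hτ2def
    have hadj2 : (FS X Y).Adj τ1 τ2 :=
      move_adj X Y hay1Adj (by rw [e1a, e1y1]; exact hqp1Adj)
    have e2x1 : τ2 x1 = τ y1 := by
      rw [hτ2def, move_other τ1 hax1.symm hx1y1, hτ1def, move_left]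
    have e2b : τ2 b = τ b := by
      rw [hτ2def, move_other τ1 hab'.symm hby1, e1b]
    have e2u : τ2 u' = τ u' := by
      rw [hτ2def, move_other τ1 hu'a hu'y1, e1u]
    have e2v : τ2 v' = τ v' := by
      rw [hτ2def, move_other τ1 hv'a hv'y1, e1v]
    set τ3 := τ2.trans (Equiv.swap (τ2 x1) (τ2 b)) with hτ3def
    have hadj3 : (FS X Y).Adj τ2 τ3 :=
      move_adj X Y hbx1Adj.symm (by rw [e2x1, e2b]; exact hpq1Adj.symm)
    have e3u : τ3 u' = τ u' := by
      rw [hτ3def, move_other τ2 hu'x1 hu'b, e2u]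
    have e3v : τ3 v' = τ v' := by
      rw [hτ3def, move_other τ2 hv'x1 hv'b, e2v]
    -- bad set bookkeeping
    have hb1 : badA τ1 = insert x1 (badA τ) := badA_move_break hx1A hy1B hq1B
    have hb2 : badA τ2 = (badA τ1).erase a :=
      badA_move_fix haA hy1B (by rw [e1y1]; exact hp1A)
    have hb3 : badA τ3 = (badA τ2).erase x1 :=
      badA_move_fix hx1A hbB (by rw [e2b]; exact hpA)
    have c1 : (badA τ1).card = (badA τ).card + 1 := by
      rw [hb1, Finset.card_insert_of_notMem hx1nb]
    have haIn1 : a ∈ badA τ1 := by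
      rw [hb1]; exact Finset.mem_insert_of_mem haBad
    have c2 : (badA τ2).card = (badA τ1).card - 1 := by
      rw [hb2, Finset.card_erase_of_mem haIn1]
    have hx1In2 : x1 ∈ badA τ2 := by
      rw [hb2]
      exact Finset.mem_erase.2 ⟨hax1.symm, by rw [hb1]; exact Finset.mem_insert_self _ _⟩
    have c3 : (badA τ3).card = (badA τ2).card - 1 := by
      rw [hb3, Finset.card_erase_of_mem hx1In2]
    refine ⟨τ3, hadj1.reachable.trans (hadj2.reachable.trans hadj3.reachable),
      ?_, ?_, ?_⟩
    · rw [e3u]; exact hpu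
    · rw [e3v]; exact hpv
    · omega

end St19

namespace St19

open Finset

variable {r : ℕ}

lemma engine (X Y : SimpleGraph (Fin r ⊕ Fin r))
    (hX : X ≤ completeBipartiteGraph (Fin r) (Fin r))
    (hY : Y ≤ completeBipartiteGraph (Fin r) (Fin r))
    (hdeg : 2 * (minDeg X + minDeg Y) ≥ 3 * r + 2)
    {u' v' u v : Fin r ⊕ Fin r}
    (hu'A : u' ∈ AF r) (hv'B : v' ∈ BF r) (huA : u ∈ AF r) (hvB : v ∈ BF r) :
    ∀ (K : ℕ) (τ : (Fin r ⊕ Fin r) ≃ (Fin r ⊕ Fin r)),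
      (badA τ).card ≤ K → τ u' = u → τ v' = v →
      ∃ μ : (Fin r ⊕ Fin r) ≃ (Fin r ⊕ Fin r),
        (FS X Y).Reachable τ μ ∧ μ u' = u ∧ μ v' = v ∧ badA μ = ∅ := by
  intro K
  induction K with
  | zero =>
    intro τ hc h1 h2
    exact ⟨τ, Reachable.refl τ, h1, h2, Finset.card_eq_zero.1 (Nat.le_zero.1 hc)⟩
  | succ K ih =>
    intro τ hc h1 h2
    rcases (badA τ).eq_empty_or_nonempty with he | hne
    · exact ⟨τ, Reachable.refl τ, h1, h2, he⟩
    · obtain ⟨τ', hr', h1', h2', hlt⟩ :=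
        decrease X Y hX hY hdeg hu'A hv'B huA hvB τ h1 h2 hne
      obtain ⟨μ, hr2, g1, g2, g3⟩ := ih τ' (by omega) h1' h2'
      exact ⟨μ, hr'.trans hr2, g1, g2, g3⟩

lemma range_inl_eq_AF : Set.range (Sum.inl : Fin r → Fin r ⊕ Fin r) = ↑(AF r) := by
  ext x
  simp only [Set.mem_range, Finset.mem_coe, mem_AF]
  constructor
  · rintro ⟨i, rfl⟩; exact ⟨i, rfl⟩
  · rintro ⟨i, rfl⟩; exact ⟨i, rfl⟩

lemma range_inr_eq_BF : Set.range (Sum.inr : Fin r → Fin r ⊕ Fin r) = ↑(BF r) := by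
  ext x
  simp only [Set.mem_range, Finset.mem_coe, mem_BF]
  constructor
  · rintro ⟨i, rfl⟩; exact ⟨i, rfl⟩
  · rintro ⟨i, rfl⟩; exact ⟨i, rfl⟩

lemma image_eq_of_maps_into {μ : (Fin r ⊕ Fin r) ≃ (Fin r ⊕ Fin r)}
    {S : Finset (Fin r ⊕ Fin r)} (h : ∀ x ∈ S, μ x ∈ S) :
    S.image μ = S := by
  classical
  apply Finset.eq_of_subset_of_card_le
  · intro y hy
    obtain ⟨x, hx, rfl⟩ := Finset.mem_image.1 hy
    exact h x hx
  · rw [Finset.card_image_of_injective _ μ.injective]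

end St19


open St19 in
theorem statement19 (r : ℕ) (hr : 2 ≤ r)
    (X Y : SimpleGraph (Fin r ⊕ Fin r))
    (hX : X ≤ completeBipartiteGraph (Fin r) (Fin r))
    (hY : Y ≤ completeBipartiteGraph (Fin r) (Fin r))
    (hdeg : 2 * (minDeg X + minDeg Y) ≥ 3 * r + 2)
    (σ : (Fin r ⊕ Fin r) ≃ (Fin r ⊕ Fin r)) (u v : Fin r ⊕ Fin r)
    (hu : u ∈ Set.range (Sum.inl : Fin r → Fin r ⊕ Fin r))
    (hv : v ∈ Set.range (Sum.inr : Fin r → Fin r ⊕ Fin r))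
    (hu' : σ.symm u ∈ Set.range (Sum.inl : Fin r → Fin r ⊕ Fin r))
    (hv' : σ.symm v ∈ Set.range (Sum.inr : Fin r → Fin r ⊕ Fin r))
    (hadj : X.Adj (σ.symm u) (σ.symm v))
    (hcount : r - 1 ≤ 2 * ((Set.range (Sum.inl : Fin r → Fin r ⊕ Fin r) \ {σ.symm u}) ∩
        (⇑σ ⁻¹' (Set.range (Sum.inl : Fin r → Fin r ⊕ Fin r) \ {u}))).ncard) :
    ∃ μ : (Fin r ⊕ Fin r) ≃ (Fin r ⊕ Fin r),
      (FS X Y).Reachable σ μ ∧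
      ⇑μ '' Set.range (Sum.inl : Fin r → Fin r ⊕ Fin r) =
        Set.range (Sum.inl : Fin r → Fin r ⊕ Fin r) ∧
      ⇑μ '' Set.range (Sum.inr : Fin r → Fin r ⊕ Fin r) =
        Set.range (Sum.inr : Fin r → Fin r ⊕ Fin r) ∧
      μ (σ.symm u) = u ∧ μ (σ.symm v) = v := by
  have huA : u ∈ AF r := by
    rw [← Finset.mem_coe, ← range_inl_eq_AF]; exact hu
  have hvB : v ∈ BF r := by
    rw [← Finset.mem_coe, ← range_inr_eq_BF]; exact hv
  have hu'A : σ.symm u ∈ AF r := by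
    rw [← Finset.mem_coe, ← range_inl_eq_AF]; exact hu'
  have hv'B : σ.symm v ∈ BF r := by
    rw [← Finset.mem_coe, ← range_inr_eq_BF]; exact hv'
  obtain ⟨μ, hreach, hμu, hμv, hμbad⟩ :=
    engine X Y hX hY hdeg hu'A hv'B huA hvB (badA σ).card σ le_rfl
      (σ.apply_symm_apply u) (σ.apply_symm_apply v)
  have hμbadB : badB μ = ∅ :=
    Finset.card_eq_zero.1 (by rw [← badA_card_eq_badB_card, hμbad, Finset.card_empty])
  have hμA : ∀ x ∈ AF r, μ x ∈ AF r := by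
    intro x hx
    rcases mem_AF_or_BF (μ x) with h | h
    · exact h
    · exact absurd (mem_badA.2 ⟨hx, h⟩) (by simp [hμbad])
  have hμB : ∀ x ∈ BF r, μ x ∈ BF r := by
    intro x hx
    rcases mem_AF_or_BF (μ x) with h | h
    · exact absurd (mem_badB.2 ⟨hx, h⟩) (by simp [hμbadB])
    · exact h
  refine ⟨μ, hreach, ?_, ?_, hμu, hμv⟩
  · rw [range_inl_eq_AF, ← Finset.coe_image, image_eq_of_maps_into hμA]
  · rw [range_inr_eq_BF, ← Finset.coe_image, image_eq_of_maps_into hμB]
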